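/- The complement of an induced matching of size t has thinness exactly t, i.e., thin(complement of tK₂) = t for every t ≥ 1. -/

import Mathlib

open SimpleGraph

/-- An ordering (given by an injective rank function `f`) and a partition (given by a
coloring `c`) are consistent: for `r < s < t`, if `r, s` are in the same class and
`t` is adjacent to `r`, then `t` is adjacent to `s`. -/
def Consistent {V : Type*} (G : SimpleGraph V) (f : V → ℕ) (c : V → ℕ) : Prop :=
  ∀ r s t : V, f r < f s → f s < f t → c r = c s → G.Adj t r → G.Adj t s

/-- Strong consistency: consistency with the ordering and with its reverse. -/
def StronglyConsistent {V : Type*} (G : SimpleGraph V) (f : V → ℕ) (c : V → ℕ) : Prop :=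
  Consistent G f c ∧
    ∀ r s t : V, f r < f s → f s < f t → c s = c t → G.Adj t r → G.Adj s r

/-- The thinness of a graph. -/
noncomputable def thin {V : Type*} (G : SimpleGraph V) : ℕ :=
  sInf {k | ∃ f c : V → ℕ, Function.Injective f ∧ (∀ v, c v < k) ∧ Consistent G f c}

/-- The proper thinness of a graph. -/
noncomputable def pthin {V : Type*} (G : SimpleGraph V) : ℕ :=
  sInf {k | ∃ f c : V → ℕ, Function.Injective f ∧ (∀ v, c v < k) ∧ StronglyConsistent G f c}

/-- Independent thinness: classes must be independent sets. -/
noncomputable def indthin {V : Type*} (G : SimpleGraph V) : ℕ :=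
  sInf {k | ∃ f c : V → ℕ, Function.Injective f ∧ (∀ v, c v < k) ∧ Consistent G f c ∧
    ∀ u v : V, c u = c v → ¬ G.Adj u v}

/-- Independent proper thinness. -/
noncomputable def indpthin {V : Type*} (G : SimpleGraph V) : ℕ :=
  sInf {k | ∃ f c : V → ℕ, Function.Injective f ∧ (∀ v, c v < k) ∧ StronglyConsistent G f c ∧
    ∀ u v : V, c u = c v → ¬ G.Adj u v}

/-- Complete thinness: classes must be cliques. -/
noncomputable def compthin {V : Type*} (G : SimpleGraph V) : ℕ :=
  sInf {k | ∃ f c : V → ℕ, Function.Injective f ∧ (∀ v, c v < k) ∧ Consistent G f c ∧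
    ∀ u v : V, u ≠ v → c u = c v → G.Adj u v}

/-- Complete proper thinness. -/
noncomputable def comppthin {V : Type*} (G : SimpleGraph V) : ℕ :=
  sInf {k | ∃ f c : V → ℕ, Function.Injective f ∧ (∀ v, c v < k) ∧ StronglyConsistent G f c ∧
    ∀ u v : V, u ≠ v → c u = c v → G.Adj u v}

/-- The incompatibility graph `G_<` of a graph and an ordering: for `v < w`,
`vw` is an edge iff there is `z > w` adjacent to `v` but not to `w`. -/
def incompat {V : Type*} (G : SimpleGraph V) (f : V → ℕ) : SimpleGraph V where
  Adj v w :=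
    (f v < f w ∧ ∃ z, f w < f z ∧ G.Adj z v ∧ ¬ G.Adj z w) ∨
    (f w < f v ∧ ∃ z, f v < f z ∧ G.Adj z w ∧ ¬ G.Adj z v)
  symm := ⟨fun v w h => h.symm⟩
  loopless := ⟨fun v h => by rcases h with ⟨h, _⟩ | ⟨h, _⟩ <;> exact lt_irrefl _ h⟩

/-- The join of two graphs. -/
def joinG {V₁ V₂ : Type*} (G₁ : SimpleGraph V₁) (G₂ : SimpleGraph V₂) :
    SimpleGraph (V₁ ⊕ V₂) where
  Adj x y := match x, y with
    | Sum.inl u, Sum.inl v => G₁.Adj u v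
    | Sum.inr u, Sum.inr v => G₂.Adj u v
    | Sum.inl _, Sum.inr _ => True
    | Sum.inr _, Sum.inl _ => True
  symm := by refine ⟨?_⟩; rintro (u | u) (v | v) h
             · exact G₁.symm.symm _ _ h
             · trivial
             · trivial
             · exact G₂.symm.symm _ _ h
  loopless := by refine ⟨?_⟩; rintro (u | u) h
                 · exact G₁.loopless.irrefl u h
                 · exact G₂.loopless.irrefl u h

/-- A graph is complete iff all pairs of distinct vertices are adjacent. -/
def IsCompleteGraph {V : Type*} (G : SimpleGraph V) : Prop :=
  ∀ u v : V, u ≠ v → G.Adj u v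

/-- The clique number of a graph. -/
noncomputable def omegaNum {V : Type*} (G : SimpleGraph V) : ℕ :=
  sSup {n | ∃ s : Finset V, s.card = n ∧ ∀ u ∈ s, ∀ v ∈ s, u ≠ v → G.Adj u v}

/-- The independence number of a graph. -/
noncomputable def alphaNum {V : Type*} (G : SimpleGraph V) : ℕ :=
  sSup {n | ∃ s : Finset V, s.card = n ∧ ∀ u ∈ s, ∀ v ∈ s, u ≠ v → ¬ G.Adj u v}


/-- The complement of a matching of size `t`: vertices `(i, a)` with `i : Fin t`,
`a : Fin 2`, adjacent iff they come from different matched pairs. -/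
def complMatching (t : ℕ) : SimpleGraph (Fin t × Fin 2) where
  Adj u v := u.1 ≠ v.1
  symm := ⟨fun _ _ h => h.symm⟩
  loopless := ⟨fun _ h => h rfl⟩

/-- The thinness of the complement of an induced matching of size `t` is exactly `t`. -/
theorem thin_complMatching (t : ℕ) (ht : 1 ≤ t) : thin (complMatching t) = t := by
  have hmem : ∃ f c : (Fin t × Fin 2) → ℕ, Function.Injective f ∧ (∀ v, c v < t) ∧
      Consistent (complMatching t) f c := by
    refine ⟨fun v => 2 * v.1.val + v.2.val, fun v => v.1.val, ?_, fun v => v.1.isLt, ?_⟩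
    · intro u v h
      simp only at h
      have hu := u.2.isLt; have hv := v.2.isLt
      have h1 : u.1.val = v.1.val := by omega
      have h2 : u.2.val = v.2.val := by omega
      exact Prod.ext (Fin.ext h1) (Fin.ext h2)
    · intro r s t' _ _ hcs hadj
      have hrs : r.1 = s.1 := Fin.ext hcs
      show t'.1 ≠ s.1
      rw [← hrs]
      exact hadj
  have hlb : ∀ k, (∃ f c : (Fin t × Fin 2) → ℕ, Function.Injective f ∧ (∀ v, c v < k) ∧
      Consistent (complMatching t) f c) → t ≤ k := by
    rintro k ⟨f, c, hf, hc, hcons⟩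
    set b : Fin t → Fin t × Fin 2 := fun i => if f (i,0) < f (i,1) then (i,0) else (i,1) with hb
    set a : Fin t → Fin t × Fin 2 := fun i => if f (i,0) < f (i,1) then (i,1) else (i,0) with ha
    have hb1 : ∀ i, (b i).1 = i := by intro i; simp only [hb]; split <;> rfl
    have ha1 : ∀ i, (a i).1 = i := by intro i; simp only [ha]; split <;> rfl
    have hba : ∀ i, f (b i) < f (a i) := by
      intro i
      simp only [hb, ha]
      split
      · assumption
      · rcases lt_or_eq_of_le (not_lt.mp (by assumption)) with h' | h'
        · exact h'
        · exact absurd (hf h') (by simp)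
    have key : ∀ i j : Fin t, i ≠ j → f (b i) < f (b j) → c (b i) ≠ c (b j) := by
      intro i j hij hflt hcc
      have hadj : (complMatching t).Adj (a j) (b i) := by
        show (a j).1 ≠ (b i).1
        rw [ha1, hb1]; exact fun h => hij h.symm
      have := hcons (b i) (b j) (a j) hflt (hba j) hcc hadj
      exact this (by rw [ha1, hb1])
    have hginj : Function.Injective (fun i : Fin t => c (b i)) := by
      intro i j heq
      by_contra hne
      rcases lt_trichotomy (f (b i)) (f (b j)) with h | h | h
      · exact key i j hne h heq
      · have := hf h
        apply hne
        have := congrArg Prod.fst this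
        rwa [hb1, hb1] at this
      · exact key j i (fun h' => hne h'.symm) h heq.symm
    have : Fintype.card (Fin t) ≤ Fintype.card (Fin k) :=
      Fintype.card_le_of_injective (fun i => (⟨c (b i), hc _⟩ : Fin k))
        (fun i j h => hginj (congrArg Fin.val h))
    simpa using this
  apply le_antisymm
  · exact Nat.sInf_le hmem
  · exact le_csInf ⟨t, hmem⟩ hlb
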